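/- Let n ≥ 2 and k ≥ 1, let Λ = ℂ[t_1^{±1}, …, t_n^{±1}] be the Laurent polynomial ring in n variables, and let A_1, …, A_n ∈ GL_k(ℂ) be pairwise commuting invertible matrices. Let P be the k × (nk) matrix over Λ obtained by concatenating the blocks t_1·A_1 − I_k, t_2·A_2 − I_k, …, t_n·A_n − I_k. If an element c ∈ Λ divides every k × k minor of P, then c is a unit of Λ. (Equivalently, the smallest principal ideal of Λ containing the ideal generated by all k × k minors of P is the unit ideal.) -/

import Mathlib

set_option maxRecDepth 100000

open AddMonoidAlgebra

namespace BoundaryAux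

variable {n : ℕ}

/-- Degree additivity: for an additive functional `φ` on `ℤⁿ`, the sup of `φ` over the
support of a product in `ℂ[ℤⁿ]` is the sum of the sups. -/
theorem sup_support_mul (φ : (Fin n → ℤ) →+ ℤ) {p q : AddMonoidAlgebra ℂ (Fin n → ℤ)}
    (hp : p.coeff.support.Nonempty) (hq : q.coeff.support.Nonempty) (hpq : (p * q).coeff.support.Nonempty) :
    (p * q).coeff.support.sup' hpq φ = p.coeff.support.sup' hp φ + q.coeff.support.sup' hq φ := by
  classical
  set M := p.coeff.support.sup' hp φ with hM
  set N := q.coeff.support.sup' hq φ with hN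
  set pt : AddMonoidAlgebra ℂ (Fin n → ℤ) := AddMonoidAlgebra.ofCoeff (Finsupp.filter (fun a => φ a = M) p.coeff) with hptdef
  set qt : AddMonoidAlgebra ℂ (Fin n → ℤ) := AddMonoidAlgebra.ofCoeff (Finsupp.filter (fun a => φ a = N) q.coeff) with hqtdef
  set pr : AddMonoidAlgebra ℂ (Fin n → ℤ) := AddMonoidAlgebra.ofCoeff (Finsupp.filter (fun a => ¬ φ a = M) p.coeff) with hprdef
  set qr : AddMonoidAlgebra ℂ (Fin n → ℤ) := AddMonoidAlgebra.ofCoeff (Finsupp.filter (fun a => ¬ φ a = N) q.coeff) with hqrdef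
  have hpdec : pt + pr = p := AddMonoidAlgebra.coeff_injective (Finsupp.filter_pos_add_filter_neg p.coeff _)
  have hqdec : qt + qr = q := AddMonoidAlgebra.coeff_injective (Finsupp.filter_pos_add_filter_neg q.coeff _)
  have hptne : pt ≠ 0 := by
    obtain ⟨a, ha, hae⟩ := Finset.exists_mem_eq_sup' hp φ
    have h1 : pt.coeff a = p.coeff a := Finsupp.filter_apply_pos _ _ hae.symm
    intro h0
    rw [h0, AddMonoidAlgebra.coeff_zero, Finsupp.zero_apply] at h1
    exact Finsupp.mem_support_iff.mp ha h1.symm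
  have hqtne : qt ≠ 0 := by
    obtain ⟨a, ha, hae⟩ := Finset.exists_mem_eq_sup' hq φ
    have h1 : qt.coeff a = q.coeff a := Finsupp.filter_apply_pos _ _ hae.symm
    intro h0
    rw [h0, AddMonoidAlgebra.coeff_zero, Finsupp.zero_apply] at h1
    exact Finsupp.mem_support_iff.mp ha h1.symm
  have htne : pt * qt ≠ 0 := mul_ne_zero hptne hqtne
  obtain ⟨g, hg⟩ := Finsupp.support_nonempty_iff.mpr (AddMonoidAlgebra.coeff_eq_zero.not.mpr htne)
  -- membership facts
  have hptsup : ∀ a ∈ pt.coeff.support, φ a = M := by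
    intro a ha
    rw [hptdef, AddMonoidAlgebra.coeff_ofCoeff, Finsupp.support_filter, Finset.mem_filter] at ha
    exact ha.2
  have hqtsup : ∀ a ∈ qt.coeff.support, φ a = N := by
    intro a ha
    rw [hqtdef, AddMonoidAlgebra.coeff_ofCoeff, Finsupp.support_filter, Finset.mem_filter] at ha
    exact ha.2
  have hprsup : ∀ a ∈ pr.coeff.support, φ a < M := by
    intro a ha
    rw [hprdef, AddMonoidAlgebra.coeff_ofCoeff, Finsupp.support_filter, Finset.mem_filter] at ha
    exact lt_of_le_of_ne (Finset.le_sup' φ ha.1) ha.2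
  have hqrsup : ∀ a ∈ qr.coeff.support, φ a < N := by
    intro a ha
    rw [hqrdef, AddMonoidAlgebra.coeff_ofCoeff, Finsupp.support_filter, Finset.mem_filter] at ha
    exact lt_of_le_of_ne (Finset.le_sup' φ ha.1) ha.2
  have hpsup : ∀ a ∈ p.coeff.support, φ a ≤ M := fun a ha => Finset.le_sup' φ ha
  have hqsup : ∀ a ∈ q.coeff.support, φ a ≤ N := fun a ha => Finset.le_sup' φ ha
  have hgφ : φ g = M + N := by
    have := AddMonoidAlgebra.support_coeff_mul_subset pt qt hg
    rw [Finset.mem_add] at this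
    obtain ⟨a, ha, b, hb, hab⟩ := this
    rw [← hab, map_add, hptsup a ha, hqtsup b hb]
  -- coefficient of the product at g
  have hdecomp : p * q = pt * qt + (pt * qr + pr * q) := by
    calc p * q = (pt + pr) * q := by rw [hpdec]
      _ = pt * q + pr * q := add_mul _ _ _
      _ = pt * (qt + qr) + pr * q := by rw [hqdec]
      _ = pt * qt + pt * qr + pr * q := by rw [mul_add]
      _ = pt * qt + (pt * qr + pr * q) := add_assoc _ _ _
  have h1 : (pt * qr).coeff g = 0 := by
    apply Finsupp.notMem_support_iff.mp
    intro hmem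
    have := AddMonoidAlgebra.support_coeff_mul_subset pt qr hmem
    rw [Finset.mem_add] at this
    obtain ⟨a, ha, b, hb, hab⟩ := this
    have : φ g < M + N := by
      rw [← hab, map_add, hptsup a ha]
      exact add_lt_add_right (hqrsup b hb) M
    exact (ne_of_lt this) hgφ
  have h2 : (pr * q).coeff g = 0 := by
    apply Finsupp.notMem_support_iff.mp
    intro hmem
    have := AddMonoidAlgebra.support_coeff_mul_subset pr q hmem
    rw [Finset.mem_add] at this
    obtain ⟨a, ha, b, hb, hab⟩ := this
    have : φ g < M + N := by
      rw [← hab, map_add]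
      exact add_lt_add_of_lt_of_le (hprsup a ha) (hqsup b hb)
    exact (ne_of_lt this) hgφ
  have hco : (p * q).coeff g = (pt * qt).coeff g := by
    rw [hdecomp, AddMonoidAlgebra.coeff_add, Finsupp.add_apply, AddMonoidAlgebra.coeff_add, Finsupp.add_apply, h1, h2, add_zero, add_zero]
  have hgmem : g ∈ (p * q).coeff.support := by
    rw [Finsupp.mem_support_iff, hco]
    exact Finsupp.mem_support_iff.mp hg
  refine le_antisymm ?_ ?_
  · apply Finset.sup'_le
    intro a ha
    have := AddMonoidAlgebra.support_coeff_mul_subset p q ha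
    rw [Finset.mem_add] at this
    obtain ⟨b, hb, c', hc', hbc⟩ := this
    rw [← hbc, map_add]
    exact add_le_add (hpsup b hb) (hqsup c' hc')
  · rw [← hgφ]
    exact Finset.le_sup' φ hgmem

/-- If `c * d` is nonzero and supported where `φ` vanishes, then `φ` is constant on the
support of `c`. -/
theorem const_on_supp (φ : (Fin n → ℤ) →+ ℤ) {c d f : AddMonoidAlgebra ℂ (Fin n → ℤ)}
    (h : c * d = f) (hf : f ≠ 0) (hfz : ∀ a ∈ f.coeff.support, φ a = 0) :
    ∀ a ∈ c.coeff.support, ∀ b ∈ c.coeff.support, φ a = φ b := by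
  subst h
  have hc0 : c ≠ 0 := fun h0 => hf (by rw [h0, zero_mul])
  have hd0 : d ≠ 0 := fun h0 => hf (by rw [h0, mul_zero])
  have hcs := Finsupp.support_nonempty_iff.mpr (AddMonoidAlgebra.coeff_eq_zero.not.mpr hc0)
  have hds := Finsupp.support_nonempty_iff.mpr (AddMonoidAlgebra.coeff_eq_zero.not.mpr hd0)
  have hfs := Finsupp.support_nonempty_iff.mpr (AddMonoidAlgebra.coeff_eq_zero.not.mpr hf)
  have hsum : ∀ ψ : (Fin n → ℤ) →+ ℤ, (∀ a ∈ (c * d).coeff.support, ψ a = 0) →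
      c.coeff.support.sup' hcs ψ + d.coeff.support.sup' hds ψ = 0 := by
    intro ψ hψ
    have hkey := sup_support_mul ψ hcs hds hfs
    have h0 : (c * d).coeff.support.sup' hfs ψ = 0 := by
      refine le_antisymm (Finset.sup'_le _ _ fun a ha => (hψ a ha).le) ?_
      obtain ⟨a, ha⟩ := hfs
      calc (0 : ℤ) = ψ a := (hψ a ha).symm
        _ ≤ _ := Finset.le_sup' ψ ha
    rw [h0] at hkey
    exact hkey.symm
  have h1 := hsum φ hfz
  have h2 := hsum (-φ) (by intro a ha; simp [hfz a ha])
  obtain ⟨a0, ha0⟩ := id hcs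
  obtain ⟨b0, hb0⟩ := id hds
  have e1 : φ a0 ≤ c.coeff.support.sup' hcs φ := Finset.le_sup' φ ha0
  have e2 : -φ a0 ≤ c.coeff.support.sup' hcs (-φ) := by
    have := Finset.le_sup' (-φ : (Fin n → ℤ) →+ ℤ) ha0
    exact this
  have e3 : φ b0 ≤ d.coeff.support.sup' hds φ := Finset.le_sup' φ hb0
  have e4 : -φ b0 ≤ d.coeff.support.sup' hds (-φ) := by
    have := Finset.le_sup' (-φ : (Fin n → ℤ) →+ ℤ) hb0
    exact this
  have hcc : c.coeff.support.sup' hcs (-φ) = - c.coeff.support.sup' hcs φ := by linarith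
  intro a ha b hb
  have f1 : φ a ≤ c.coeff.support.sup' hcs φ := Finset.le_sup' φ ha
  have f2 : -φ a ≤ c.coeff.support.sup' hcs (-φ) := by
    have := Finset.le_sup' (-φ : (Fin n → ℤ) →+ ℤ) ha
    exact this
  have f3 : φ b ≤ c.coeff.support.sup' hcs φ := Finset.le_sup' φ hb
  have f4 : -φ b ≤ c.coeff.support.sup' hcs (-φ) := by
    have := Finset.le_sup' (-φ : (Fin n → ℤ) →+ ℤ) hb
    exact this
  linarith

/-- The subring of the Laurent ring consisting of elements supported on the `l`-th axis. -/
noncomputable def axisSubring (n : ℕ) (l : Fin n) : Subring (AddMonoidAlgebra ℂ (Fin n → ℤ)) where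
  carrier := {x | ∀ a ∈ x.coeff.support, ∀ i, i ≠ l → a i = 0}
  zero_mem' := by simp
  one_mem' := by
    intro a ha i hi
    rw [AddMonoidAlgebra.one_def, AddMonoidAlgebra.coeff_single] at ha
    have := Finsupp.support_single_subset ha
    rw [Finset.mem_singleton] at this
    rw [this]
    rfl
  add_mem' := by
    classical
    intro x y hx hy a ha i hi
    rw [AddMonoidAlgebra.coeff_add] at ha
    have := Finsupp.support_add ha
    rw [Finset.mem_union] at this
    rcases this with h | h
    · exact hx a h i hi
    · exact hy a h i hi
  neg_mem' := by
    intro x hx a ha i hi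
    rw [AddMonoidAlgebra.coeff_neg, Finsupp.support_neg] at ha
    exact hx a ha i hi
  mul_mem' := by
    classical
    intro x y hx hy a ha i hi
    have := AddMonoidAlgebra.support_coeff_mul_subset x y ha
    rw [Finset.mem_add] at this
    obtain ⟨b, hb, c', hc', hbc⟩ := this
    rw [← hbc, Pi.add_apply, hx b hb i hi, hy c' hc' i hi, add_zero]

theorem det_mem {R : Type*} [CommRing R] {k : ℕ} (S : Subring R)
    (M : Matrix (Fin k) (Fin k) R) (h : ∀ i j, M i j ∈ S) : M.det ∈ S := by
  rw [Matrix.det_apply']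
  exact S.sum_mem fun σ _ => S.mul_mem (intCast_mem S _) (S.prod_mem fun i _ => h _ _)

end BoundaryAux

open BoundaryAux in
/-- Let `n ≥ 2`, `k ≥ 1`, let `Λ = ℂ[t₁^{±1},…,tₙ^{±1}]` be the Laurent
polynomial ring in `n` variables (the group algebra of `ℤⁿ` over `ℂ`), and let
`A₁,…,Aₙ ∈ GL_k(ℂ)` be pairwise commuting invertible matrices.  Let `P` be the
`k × (nk)` matrix over `Λ` obtained by concatenating the blocks `t_l · A_l − I_k`.
If `c ∈ Λ` divides every `k × k` minor of `P`, then `c` is a unit of `Λ`. -/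
theorem boundary_manifold_stmt1
    (n k : ℕ) (hn : 2 ≤ n) (hk : 1 ≤ k)
    (A : Fin n → Matrix (Fin k) (Fin k) ℂ)
    (hA : ∀ l, IsUnit (A l))
    (hcomm : ∀ l l', A l * A l' = A l' * A l)
    (P : Matrix (Fin k) (Fin n × Fin k) (AddMonoidAlgebra ℂ (Fin n → ℤ)))
    (hP : ∀ (i : Fin k) (l : Fin n) (j : Fin k),
      P i (l, j) =
        AddMonoidAlgebra.single (Pi.single l (1 : ℤ)) (A l i j)
          - if i = j then 1 else 0)
    (c : AddMonoidAlgebra ℂ (Fin n → ℤ))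
    (hc : ∀ s : Fin k → Fin n × Fin k,
      c ∣ Matrix.det (Matrix.of fun i j => P i (s j))) :
    IsUnit c := by
  classical
  set f : Fin n → AddMonoidAlgebra ℂ (Fin n → ℤ) :=
    fun l => Matrix.det (Matrix.of fun i j => P i (l, j)) with hfdef
  have hdiv : ∀ l, c ∣ f l := fun l => hc (fun j => (l, j))
  -- support of the block minor is on the l-th axis
  have hsupp : ∀ l : Fin n, ∀ a ∈ (f l).coeff.support, ∀ i, i ≠ l → a i = 0 := by
    intro l
    have : f l ∈ axisSubring n l := by
      apply det_mem
      intro i j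
      rw [Matrix.of_apply, hP]
      apply sub_mem
      · intro a ha i' hi'
        rw [AddMonoidAlgebra.coeff_single] at ha
        have := Finsupp.support_single_subset ha
        rw [Finset.mem_singleton] at this
        rw [this]
        exact Pi.single_eq_of_ne hi' 1
      · split_ifs
        · exact one_mem _
        · exact zero_mem _
    exact this
  -- each block minor is nonzero
  have hne : ∀ l : Fin n, f l ≠ 0 := by
    intro l
    set p : Polynomial ℂ := Matrix.det (Matrix.of fun i j : Fin k =>
      (Polynomial.X * Polynomial.C (A l i j) - if i = j then 1 else 0)) with hpdef
    have hp0 : p.eval 0 ≠ 0 := by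
      have h1 : p.eval 0 = Matrix.det (-1 : Matrix (Fin k) (Fin k) ℂ) := by
        rw [hpdef, ← Polynomial.coe_evalRingHom, RingHom.map_det]
        congr 1
        ext i j
        simp only [RingHom.mapMatrix_apply, Matrix.map_apply, Matrix.of_apply,
          Polynomial.coe_evalRingHom, Polynomial.eval_sub, Polynomial.eval_mul,
          Polynomial.eval_X, Polynomial.eval_C, zero_mul, apply_ite,
          Polynomial.eval_one, Polynomial.eval_zero]
        rw [Matrix.neg_apply, Matrix.one_apply]
        split_ifs <;> simp
      rw [h1, Matrix.det_neg, Matrix.det_one, mul_one]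
      simp
    have hpne : p ≠ 0 := fun h => hp0 (by rw [h, Polynomial.eval_zero])
    obtain ⟨z, hz⟩ := Infinite.exists_notMem_finset (p.roots.toFinset ∪ {0} : Finset ℂ)
    rw [Finset.mem_union, Finset.mem_singleton] at hz
    push_neg at hz
    obtain ⟨hzr, hz0⟩ := hz
    have hzval : p.eval z ≠ 0 := by
      intro hev
      exact hzr (Multiset.mem_toFinset.mpr (Polynomial.mem_roots'.mpr ⟨hpne, hev⟩))
    set zu : ℂˣ := Units.mk0 z hz0 with hzu
    -- evaluation homomorphism sending t_l ↦ z, t_i ↦ 1 (i ≠ l)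
    set Φ : Multiplicative (Fin n → ℤ) →* ℂ :=
      { toFun := fun a => ((zu ^ (Multiplicative.toAdd a l) : ℂˣ) : ℂ)
        map_one' := by simp
        map_mul' := by
          intro a b
          show ((zu ^ ((Multiplicative.toAdd a + Multiplicative.toAdd b) l) : ℂˣ) : ℂ) = _
          rw [Pi.add_apply, zpow_add, Units.val_mul] } with hΦ
    set E := AddMonoidAlgebra.lift ℂ ℂ (Fin n → ℤ) Φ with hE
    have h1 : E ((Matrix.of fun i j => P i (l, j)).det)
        = ((Matrix.of fun i j => P i (l, j)).map ⇑E).det := by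
      simpa [AlgHom.coe_toRingHom, RingHom.mapMatrix_apply] using
        RingHom.map_det (E : AddMonoidAlgebra ℂ (Fin n → ℤ) →+* ℂ)
          (Matrix.of fun i j => P i (l, j))
    have h2 : ((Matrix.of fun i j => P i (l, j)).map ⇑E)
        = Matrix.of (fun i j => A l i j * z - if i = j then 1 else 0) := by
      ext i j
      simp only [Matrix.map_apply, Matrix.of_apply]
      rw [hP, map_sub]
      have hsingle : E (AddMonoidAlgebra.single (Pi.single l (1 : ℤ)) (A l i j))
          = A l i j * z := by
        rw [hE, AddMonoidAlgebra.lift_single]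
        have hΦ1 : Φ (Multiplicative.ofAdd (Pi.single l (1 : ℤ))) = z := by
          rw [hΦ]
          change ((zu ^ ((Pi.single l (1 : ℤ) : Fin n → ℤ) l) : ℂˣ) : ℂ) = z
          rw [Pi.single_eq_same, zpow_one, hzu, Units.val_mk0]
        rw [hΦ1, smul_eq_mul]
      rw [hsingle]
      have hite : E ((if i = j then 1 else 0) : AddMonoidAlgebra ℂ (Fin n → ℤ))
          = (if i = j then 1 else 0 : ℂ) := by
        split_ifs
        · exact map_one E
        · exact map_zero E
      rw [hite]
    have h3 : p.eval z
        = (Matrix.of (fun i j : Fin k => A l i j * z - if i = j then 1 else 0)).det := by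
      have := RingHom.map_det (Polynomial.evalRingHom z)
        (Matrix.of fun i j : Fin k =>
          (Polynomial.X * Polynomial.C (A l i j) - if i = j then 1 else 0))
      rw [hpdef]
      simp only [RingHom.mapMatrix_apply, Polynomial.coe_evalRingHom] at this
      rw [this]
      congr 1
      ext i j
      by_cases hij : i = j
      · subst hij
        simp only [Matrix.map_apply, Matrix.of_apply, eq_self_iff_true, if_true,
          Polynomial.eval_sub, Polynomial.eval_mul, Polynomial.eval_X,
          Polynomial.eval_C, Polynomial.eval_one]
        ring
      · simp only [Matrix.map_apply, Matrix.of_apply, if_neg hij,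
          Polynomial.eval_sub, Polynomial.eval_mul, Polynomial.eval_X,
          Polynomial.eval_C, Polynomial.eval_zero]
        ring
    intro h0
    apply hzval
    have h4 : E ((Matrix.of fun i j => P i (l, j)).det) = 0 := by
      have h5 : (Matrix.of fun i j => P i (l, j)).det = 0 := h0
      rw [h5, map_zero]
    rw [h1, h2] at h4
    rw [h3, h4]
  -- c is nonzero
  have hc0 : c ≠ 0 := by
    rintro rfl
    obtain ⟨d, hd⟩ := hdiv ⟨0, by omega⟩
    exact hne ⟨0, by omega⟩ (by rw [hd, zero_mul])
  -- every coordinate is constant on the support of c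
  have hconst : ∀ i : Fin n, ∀ a ∈ c.coeff.support, ∀ b ∈ c.coeff.support, a i = b i := by
    intro i
    obtain ⟨l, hl⟩ : ∃ l : Fin n, i ≠ l := by
      rcases eq_or_ne i ⟨0, by omega⟩ with h | h
      · exact ⟨⟨1, by omega⟩, by rw [h]; simp [Fin.ext_iff]⟩
      · exact ⟨⟨0, by omega⟩, h⟩
    obtain ⟨d, hd⟩ := hdiv l
    exact const_on_supp (Pi.evalAddMonoidHom (fun _ => ℤ) i) hd.symm (hne l)
      (fun a ha => hsupp l a ha i hl)
  obtain ⟨a0, ha0⟩ := Finsupp.support_nonempty_iff.mpr (AddMonoidAlgebra.coeff_eq_zero.not.mpr hc0)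
  have hsub : c.coeff.support ⊆ {a0} := by
    intro b hb
    rw [Finset.mem_singleton]
    exact funext fun i => hconst i b hb a0 ha0
  have hcs : c = AddMonoidAlgebra.single a0 (c.coeff a0) :=
    AddMonoidAlgebra.coeff_injective (Finsupp.support_subset_singleton.mp hsub)
  have hca : c.coeff a0 ≠ 0 := Finsupp.mem_support_iff.mp ha0
  refine IsUnit.of_mul_eq_one (a := c) (AddMonoidAlgebra.single (-a0) (c.coeff a0)⁻¹) ?_
  nth_rewrite 1 [hcs]
  rw [AddMonoidAlgebra.single_mul_single, add_neg_cancel, mul_inv_cancel₀ hca]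
  exact AddMonoidAlgebra.one_def.symm
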